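/- Let ρ_1,…,ρ_K ∈ (0,1) with ρ_* = max_k ρ_k, let c_1,…,c_K ∈ ℝ with ∑_{k:ρ_k=ρ_*} c_k ≠ 0, and let a_1,…,a_K ∈ ℝ satisfy a_k = a whenever ρ_k = ρ_*. Then (∑_{k=1}^K c_k a_k (1-ρ_k)^{-1} ρ_k^n)/(∑_{k=1}^K c_k ρ_k^n) converges to a(1-ρ_*)^{-1} as n → ∞. -/
import Mathlib


open Filter Finset

theorem stmt_1 (K : ℕ) (hK : 0 < K) (ρ c a : Fin K → ℝ) (A : ℝ)
    (hρ : ∀ k, ρ k ∈ Set.Ioo (0:ℝ) 1) (ρs : ℝ)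
    (hρs : IsGreatest (Set.range ρ) ρs)
    (hc : ∑ k ∈ Finset.univ.filter (fun k => ρ k = ρs), c k ≠ 0)
    (ha : ∀ k, ρ k = ρs → a k = A) :
    Tendsto
      (fun n : ℕ =>
        (∑ k, c k * a k * (1 - ρ k)⁻¹ * ρ k ^ n) / (∑ k, c k * ρ k ^ n))
      atTop (nhds (A * (1 - ρs)⁻¹)) := by
  obtain ⟨k0, hk0⟩ := hρs.1
  have hρs_pos : 0 < ρs := hk0 ▸ (hρ k0).1
  set C : ℝ := ∑ k ∈ Finset.univ.filter (fun k => ρ k = ρs), c k with hC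
  -- per-term limits
  have hterm : ∀ (d : Fin K → ℝ), ∀ k : Fin K,
      Tendsto (fun n : ℕ => d k * (ρ k / ρs) ^ n) atTop
        (nhds (if ρ k = ρs then d k else 0)) := by
    intro d k
    by_cases h : ρ k = ρs
    · simp [h, div_self hρs_pos.ne']
    · have h1 : ρ k / ρs < 1 := by
        rw [div_lt_one hρs_pos]
        exact lt_of_le_of_ne (hρs.2 ⟨k, rfl⟩) h
      have h0 : 0 ≤ ρ k / ρs := div_nonneg (hρ k).1.le hρs_pos.le
      have := tendsto_pow_atTop_nhds_zero_of_lt_one h0 h1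
      simpa [h] using (this.const_mul (d k))
  have hnum : Tendsto (fun n : ℕ => ∑ k, (c k * a k * (1 - ρ k)⁻¹) * (ρ k / ρs) ^ n)
      atTop (nhds (C * (A * (1 - ρs)⁻¹))) := by
    have := tendsto_finset_sum Finset.univ
      (fun k _ => hterm (fun k => c k * a k * (1 - ρ k)⁻¹) k)
    convert this using 2
    rw [← Finset.sum_filter, Finset.sum_mul]
    apply Finset.sum_congr rfl
    intro k hk
    rw [Finset.mem_filter] at hk
    rw [ha k hk.2, hk.2]
    ring
  have hden : Tendsto (fun n : ℕ => ∑ k, c k * (ρ k / ρs) ^ n) atTop (nhds C) := by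
    have := tendsto_finset_sum Finset.univ (fun k _ => hterm c k)
    convert this using 2
    rw [← Finset.sum_filter]
  have hdiv := hnum.div hden hc
  have heq : (fun n : ℕ =>
        (∑ k, c k * a k * (1 - ρ k)⁻¹ * ρ k ^ n) / (∑ k, c k * ρ k ^ n))
      = (fun n : ℕ => (∑ k, (c k * a k * (1 - ρ k)⁻¹) * (ρ k / ρs) ^ n) /
          (∑ k, c k * (ρ k / ρs) ^ n)) := by
    funext n
    have hne : (ρs ^ n : ℝ) ≠ 0 := pow_ne_zero _ hρs_pos.ne'
    have h1 : (∑ k, (c k * a k * (1 - ρ k)⁻¹) * (ρ k / ρs) ^ n)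
        = (∑ k, c k * a k * (1 - ρ k)⁻¹ * ρ k ^ n) / ρs ^ n := by
      rw [Finset.sum_div]
      exact Finset.sum_congr rfl fun k _ => by rw [div_pow]; ring
    have h2 : (∑ k, c k * (ρ k / ρs) ^ n) = (∑ k, c k * ρ k ^ n) / ρs ^ n := by
      rw [Finset.sum_div]
      exact Finset.sum_congr rfl fun k _ => by rw [div_pow]; ring
    rw [h1, h2, div_div_div_cancel_right₀ hne]
  rw [heq]
  have : C * (A * (1 - ρs)⁻¹) / C = A * (1 - ρs)⁻¹ := by
    rw [mul_comm C, mul_div_assoc, div_self hc, mul_one]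
  rw [← this]
  exact hdiv
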